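/- Every c-causet has exactly four distinct offspring under the production relation, with shell sequences (s_0,...,s_n+2), (s_0,...,s_n+1,1), (s_0,...,s_n,2), and (s_0,...,s_n,1,1), where (s_0,...,s_n) is the shell sequence of the parent. -/

import Mathlib

/-- Adjoining a maximal element to a c-causet (identified with its shell sequence)
either enlarges the last shell by one or starts a new shell of size one. -/
def StepShell (s t : List ℕ) : Prop :=
  (∃ h : s ≠ [], t = s.dropLast ++ [s.getLast h + 1]) ∨ t = s ++ [1]

/-- `x` produces `y` if `y` is obtained from `x` by adjoining two maximal elements in
succession. -/
def Produces (s y : List ℕ) : Prop :=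
  ∃ t : List ℕ, StepShell s t ∧ StepShell t y

lemma step_concat (l : List ℕ) (a : ℕ) (t : List ℕ) :
    StepShell (l ++ [a]) t ↔ t = l ++ [a + 1] ∨ t = l ++ [a] ++ [1] := by
  unfold StepShell
  constructor
  · rintro (⟨h, rfl⟩ | rfl)
    · left; simp [List.dropLast_concat, List.getLast_concat]
    · right; rfl
  · rintro (rfl | rfl)
    · left; exact ⟨by simp, by simp [List.dropLast_concat, List.getLast_concat]⟩
    · right; rfl


/-- Every c-causet with shell sequence `(s₀,…,sₙ)` has exactly four distinct offspring,
with shell sequences `(s₀,…,sₙ+2)`, `(s₀,…,sₙ+1,1)`, `(s₀,…,sₙ,2)` and `(s₀,…,sₙ,1,1)`. -/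
theorem stmt_5 (s : List ℕ) (hs : s ≠ []) :
    {y : List ℕ | Produces s y} =
      {s.dropLast ++ [s.getLast hs + 2],
       s.dropLast ++ [s.getLast hs + 1, 1],
       s ++ [2],
       s ++ [1, 1]} ∧
    ({s.dropLast ++ [s.getLast hs + 2],
      s.dropLast ++ [s.getLast hs + 1, 1],
      s ++ [2],
      s ++ [1, 1]} : Finset (List ℕ)).card = 4 := by
  obtain ⟨l, a, rfl⟩ : ∃ l a, s = l ++ [a] := ⟨s.dropLast, s.getLast hs, (List.dropLast_append_getLast hs).symm⟩
  have hd : (l ++ [a]).dropLast = l := List.dropLast_concat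
  have hg : (l ++ [a]).getLast hs = a := List.getLast_concat
  rw [hd, hg]
  constructor
  · ext y
    simp only [Set.mem_setOf_eq, Produces, Set.mem_insert_iff, Set.mem_singleton_iff]
    constructor
    · rintro ⟨t, h1, h2⟩
      rw [step_concat] at h1
      rcases h1 with rfl | rfl
      · rw [step_concat] at h2
        rcases h2 with rfl | rfl
        · left; simp
        · right; left; simp
      · rw [show l ++ [a] ++ [1] = (l ++ [a]) ++ [1] from rfl, step_concat] at h2
        rcases h2 with rfl | rfl
        · right; right; left; simp
        · right; right; right; simp
    · rintro (rfl | rfl | rfl | rfl)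
      · exact ⟨l ++ [a+1], (step_concat ..).2 (Or.inl rfl), (step_concat ..).2 (Or.inl (by simp))⟩
      · exact ⟨l ++ [a+1], (step_concat ..).2 (Or.inl rfl), (step_concat ..).2 (Or.inr (by simp))⟩
      · exact ⟨l ++ [a] ++ [1], (step_concat ..).2 (Or.inr rfl), (step_concat ..).2 (Or.inl (by simp))⟩
      · exact ⟨l ++ [a] ++ [1], (step_concat ..).2 (Or.inr rfl), (step_concat ..).2 (Or.inr (by simp))⟩
  · have h1 : l ++ [a + 2] ≠ l ++ [a + 1, 1] := by intro h; simpa using congrArg List.length h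
    have h2 : l ++ [a + 2] ≠ l ++ [a] ++ [2] := by intro h; simpa using congrArg List.length h
    have h3 : l ++ [a + 2] ≠ l ++ [a] ++ [1, 1] := by intro h; simpa using congrArg List.length h
    have h4 : l ++ [a + 1, 1] ≠ l ++ [a] ++ [2] := by
      intro h
      rw [List.append_assoc, List.append_cancel_left_eq] at h
      simp at h
    have h5 : l ++ [a + 1, 1] ≠ l ++ [a] ++ [1, 1] := by intro h; simpa using congrArg List.length h
    have h6 : l ++ [a] ++ [2] ≠ l ++ [a] ++ [1, 1] := by intro h; simpa using congrArg List.length h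
    simp [Finset.card_insert_of_notMem, h1, h2, h3, h4, h5, h6]
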